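/- α₀ = α if and only if σ_s ≤ σ_b. -/

import Mathlib

open Filter Topology

/-- A cumulative distribution function: non-decreasing, right-continuous,
tending to 0 at -∞ and to 1 at +∞. -/
def IsCDF (G : ℝ → ℝ) : Prop :=
  Monotone G ∧ (∀ x : ℝ, ContinuousWithinAt G (Set.Ici x) x) ∧
    Tendsto G atBot (𝓝 0) ∧ Tendsto G atTop (𝓝 1)

/-- The identifiable mixing proportion α₀. -/
noncomputable def alpha0 (F Fb : ℝ → ℝ) : ℝ :=
  sInf {γ : ℝ | γ ∈ Set.Ioc (0 : ℝ) 1 ∧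
    IsCDF (fun x => (F x - (1 - γ) * Fb x) / γ)}

open MeasureTheory ProbabilityTheory

open Set Real
open scoped NNReal

lemma gauss_cdf_eq (m : ℝ) {v : ℝ≥0} (hv : v ≠ 0) (x : ℝ) :
    (gaussianReal m v (Set.Iic x)).toReal = ∫ t in Set.Iic x, gaussianPDFReal m v t := by
  rw [gaussianReal_apply_eq_integral m hv,
    ENNReal.toReal_ofReal (setIntegral_nonneg measurableSet_Iic
      (fun t _ => gaussianPDFReal_nonneg m v t))]

lemma isCDF_of_density (g : ℝ → ℝ) (hint : Integrable g) (hnn : ∀ x, 0 ≤ g x)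
    (htot : ∫ x, g x = 1) : IsCDF (fun x => ∫ t in Set.Iic x, g t) := by
  have hIic : ∀ x : ℝ, IntegrableOn g (Iic x) := fun x => hint.integrableOn
  have hsub : ∀ x : ℝ, (∫ t in Iic x, g t) = (∫ t in Iic (0:ℝ), g t) + ∫ t in (0:ℝ)..x, g t := by
    intro x
    have := intervalIntegral.integral_Iic_sub_Iic (hIic 0) (hIic x)
    linarith
  refine ⟨?_, ?_, ?_, ?_⟩
  · intro x y hxy
    exact setIntegral_mono_set (hIic y) (ae_of_all _ hnn) (HasSubset.Subset.eventuallyLE (Iic_subset_Iic.mpr hxy))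
  · intro x
    have hc : Continuous (fun x => ∫ t in Set.Iic x, g t) := by
      have heq : (fun x => ∫ t in Set.Iic x, g t)
          = fun x => (∫ t in Iic (0:ℝ), g t) + ∫ t in (0:ℝ)..x, g t := funext hsub
      rw [heq]
      exact continuous_const.add (hint.continuous_primitive 0)
    exact hc.continuousWithinAt
  · have h1 : Tendsto (fun x : ℝ => ∫ t in (x:ℝ)..(0:ℝ), g t) atBot (𝓝 (∫ t in Iic (0:ℝ), g t)) :=
      intervalIntegral_tendsto_integral_Iic 0 (hIic 0) tendsto_id
    have h2 : Tendsto (fun x : ℝ => (∫ t in Iic (0:ℝ), g t) - ∫ t in (x:ℝ)..(0:ℝ), g t) atBot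
        (𝓝 ((∫ t in Iic (0:ℝ), g t) - ∫ t in Iic (0:ℝ), g t)) := tendsto_const_nhds.sub h1
    rw [sub_self] at h2
    refine h2.congr fun x => ?_
    have := intervalIntegral.integral_Iic_sub_Iic (hIic x) (hIic 0)
    linarith
  · have h1 : Tendsto (fun x : ℝ => ∫ t in (0:ℝ)..x, g t) atTop (𝓝 (∫ t in Ioi (0:ℝ), g t)) :=
      intervalIntegral_tendsto_integral_Ioi 0 hint.integrableOn tendsto_id
    have h2 : Tendsto (fun x : ℝ => (∫ t in Iic (0:ℝ), g t) + ∫ t in (0:ℝ)..x, g t) atTop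
        (𝓝 ((∫ t in Iic (0:ℝ), g t) + ∫ t in Ioi (0:ℝ), g t)) := tendsto_const_nhds.add h1
    rw [intervalIntegral.integral_Iic_add_Ioi hint.integrableOn hint.integrableOn, htot] at h2
    exact Tendsto.congr (fun x => (hsub x).symm) h2
lemma tendsto_quad {a : ℝ} (b c : ℝ) (ha : a < 0) :
    Tendsto (fun x : ℝ => a * x ^ 2 + b * x + c) atBot atBot := by
  have form : ∀ x : ℝ, a * x ^ 2 + b * x + c
      = a * (x + b / (2 * a)) ^ 2 + (c - b ^ 2 / (4 * a)) := by
    intro x; field_simp [ha.ne]; ring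
  have h1 : Tendsto (fun x : ℝ => x + b / (2 * a)) atBot atBot :=
    tendsto_atBot_add_const_right _ _ tendsto_id
  have h2 : Tendsto (fun y : ℝ => y ^ 2) atBot atTop := by
    have := Filter.Tendsto.atBot_mul_atBot₀ (tendsto_id : Tendsto (id : ℝ → ℝ) atBot atBot) tendsto_id
    exact this.congr fun y => (sq y).symm
  have h3 : Tendsto (fun x : ℝ => (x + b / (2 * a)) ^ 2) atBot atTop := h2.comp h1
  have h4 : Tendsto (fun x : ℝ => a * (x + b / (2 * a)) ^ 2) atBot atBot :=
    h3.const_mul_atTop_of_neg ha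
  have h5 := tendsto_atBot_add_const_right _ (c - b ^ 2 / (4 * a)) h4
  exact h5.congr fun x => (form x).symm

lemma tendsto_lin {b : ℝ} (c : ℝ) (hb : 0 < b) :
    Tendsto (fun x : ℝ => b * x + c) atBot atBot :=
  tendsto_atBot_add_const_right _ _ (tendsto_id.const_mul_atBot hb)

lemma chernoff (m : ℝ) {v : ℝ≥0} (hv : v ≠ 0) {x : ℝ} (hx : x ≤ m) :
    ∫ t in Iic x, gaussianPDFReal m v t ≤ Real.exp (-(x - m) ^ 2 / (2 * v)) := by
  have hvpos : (0:ℝ) < v := by positivity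
  have key : ∀ t ∈ Iic x, gaussianPDFReal m v t
      ≤ Real.exp (-(x - m) ^ 2 / (2 * v)) * gaussianPDFReal x v t := by
    intro t ht
    simp only [gaussianPDFReal, mem_Iic] at *
    have hE : rexp (-(t - m) ^ 2 / (2 * v)) ≤
        rexp (-(x - m) ^ 2 / (2 * v)) * rexp (-(t - x) ^ 2 / (2 * v)) := by
      rw [← Real.exp_add, Real.exp_le_exp, ← add_div,
        div_le_div_iff_of_pos_right (by positivity)]
      nlinarith [mul_nonneg (sub_nonneg.2 ht) (sub_nonneg.2 hx)]
    have hc : (0:ℝ) ≤ (√(2 * π * (v:ℝ)))⁻¹ := by positivity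
    calc (√(2 * π * (v:ℝ)))⁻¹ * rexp (-(t - m) ^ 2 / (2 * v))
        ≤ (√(2 * π * (v:ℝ)))⁻¹ * (rexp (-(x - m) ^ 2 / (2 * v)) * rexp (-(t - x) ^ 2 / (2 * v))) :=
          mul_le_mul_of_nonneg_left hE hc
      _ = rexp (-(x - m) ^ 2 / (2 * v)) * ((√(2 * π * (v:ℝ)))⁻¹ * rexp (-(t - x) ^ 2 / (2 * v))) := by
          ring
  calc ∫ t in Iic x, gaussianPDFReal m v t
      ≤ ∫ t in Iic x, Real.exp (-(x - m) ^ 2 / (2 * v)) * gaussianPDFReal x v t :=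
        setIntegral_mono_on (integrable_gaussianPDFReal m v).integrableOn
          ((integrable_gaussianPDFReal x v).const_mul _).integrableOn measurableSet_Iic key
    _ ≤ ∫ t, Real.exp (-(x - m) ^ 2 / (2 * v)) * gaussianPDFReal x v t :=
        setIntegral_le_integral ((integrable_gaussianPDFReal x v).const_mul _)
          (ae_of_all _ fun t => mul_nonneg (Real.exp_nonneg _) (gaussianPDFReal_nonneg x v t))
    _ = Real.exp (-(x - m) ^ 2 / (2 * v)) := by
        rw [integral_const_mul, integral_gaussianPDFReal_eq_one x hv, mul_one]

lemma cdf_lower (m : ℝ) (v : ℝ≥0) {x ε : ℝ} (hε : 0 < ε) (hx : x ≤ m) :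
    ε * gaussianPDFReal m v (x - ε) ≤ ∫ t in Iic x, gaussianPDFReal m v t := by
  have key : ∀ t ∈ Ioc (x - ε) x, gaussianPDFReal m v (x - ε) ≤ gaussianPDFReal m v t := by
    intro t ht
    simp only [gaussianPDFReal, mem_Ioc] at *
    refine mul_le_mul_of_nonneg_left ?_ (by positivity)
    rw [Real.exp_le_exp]
    rcases eq_or_ne v 0 with rfl | hv
    · simp
    have hvpos : (0:ℝ) < v := by positivity
    rw [div_le_div_iff_of_pos_right (by positivity)]
    nlinarith [ht.1.le, ht.2]
  calc ε * gaussianPDFReal m v (x - ε)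
      = ∫ _ in Ioc (x - ε) x, gaussianPDFReal m v (x - ε) := by
        rw [setIntegral_const, Real.volume_real_Ioc_of_le (by linarith), smul_eq_mul]
        ring_nf
    _ ≤ ∫ t in Ioc (x - ε) x, gaussianPDFReal m v t := by
        refine setIntegral_mono_on (integrableOn_const (by rw [Real.volume_Ioc]; exact ENNReal.ofReal_ne_top))
          (integrable_gaussianPDFReal m v).integrableOn measurableSet_Ioc key
    _ ≤ ∫ t in Iic x, gaussianPDFReal m v t :=
        setIntegral_mono_set (integrable_gaussianPDFReal m v).integrableOn
          (ae_of_all _ fun t => gaussianPDFReal_nonneg m v t)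
          (HasSubset.Subset.eventuallyLE Ioc_subset_Iic_self)

lemma cdf_pos (m : ℝ) {v : ℝ≥0} (hv : v ≠ 0) (x : ℝ) :
    0 < ∫ t in Iic x, gaussianPDFReal m v t := by
  rw [setIntegral_pos_iff_support_of_nonneg_ae
    (ae_of_all _ fun t => gaussianPDFReal_nonneg m v t)
    (integrable_gaussianPDFReal m v).integrableOn]
  have : Function.support (gaussianPDFReal m v) = univ := by
    ext t; simp [Function.mem_support, (gaussianPDFReal_pos m v t hv).ne']
  rw [this, univ_inter]
  simp [Real.volume_Iic]

lemma pdf_reflect (m : ℝ) (v : ℝ≥0) (t : ℝ) :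
    gaussianPDFReal (-m) v (-t) = gaussianPDFReal m v t := by
  simp only [gaussianPDFReal]
  ring_nf

lemma cdf_reflect (m : ℝ) {v : ℝ≥0} (hv : v ≠ 0) (x : ℝ) :
    ∫ t in Iic (-x), gaussianPDFReal (-m) v t = 1 - ∫ t in Iic x, gaussianPDFReal m v t := by
  have h1 : ∫ t in Ioi x, gaussianPDFReal (-m) v (-t) = ∫ t in Iic (-x), gaussianPDFReal (-m) v t :=
    integral_comp_neg_Ioi x (gaussianPDFReal (-m) v)
  rw [← h1]
  simp_rw [pdf_reflect m v]
  have h2 := intervalIntegral.integral_Iic_add_Ioi (b := x)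
    (integrable_gaussianPDFReal m v).integrableOn (integrable_gaussianPDFReal m v).integrableOn
  rw [integral_gaussianPDFReal_eq_one m hv] at h2
  linarith

lemma quad_min (u B C : ℝ) (hu : 0 < u) : ∃ m1 : ℝ, ∀ x : ℝ, m1 ≤ u * x ^ 2 + 2 * B * x + C := by
  refine ⟨C - B ^ 2 / u, fun x => ?_⟩
  have hBu : B ^ 2 / u * u = B ^ 2 := div_mul_cancel₀ _ hu.ne'
  nlinarith [sq_nonneg (u * x + B), hu]

lemma pdf_ratio (ms mb : ℝ) {vs vb : ℝ≥0} (hvb : vb ≠ 0) (h : (vb:ℝ) < vs) :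
    ∃ c : ℝ, 0 < c ∧ ∀ x, c * gaussianPDFReal mb vb x ≤ gaussianPDFReal ms vs x := by
  have hwb : (0:ℝ) < vb := by positivity
  have hws : (0:ℝ) < vs := lt_trans hwb h
  obtain ⟨m1, hm1⟩ := quad_min ((vs:ℝ) - vb) ((vb:ℝ) * ms - (vs:ℝ) * mb)
    ((vs:ℝ) * mb ^ 2 - (vb:ℝ) * ms ^ 2) (by linarith)
  have claim : ∀ x : ℝ, m1 / (2 * (vs:ℝ) * vb)
      ≤ -(x - ms) ^ 2 / (2 * (vs:ℝ)) + (x - mb) ^ 2 / (2 * (vb:ℝ)) := by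
    intro x
    have hform : -(x - ms) ^ 2 / (2 * (vs:ℝ)) + (x - mb) ^ 2 / (2 * (vb:ℝ))
        = (((vs:ℝ) - vb) * x ^ 2 + 2 * ((vb:ℝ) * ms - (vs:ℝ) * mb) * x
          + ((vs:ℝ) * mb ^ 2 - (vb:ℝ) * ms ^ 2)) / (2 * (vs:ℝ) * vb) := by
      field_simp; ring
    rw [hform, div_le_div_iff_of_pos_right (by positivity)]
    exact hm1 x
  refine ⟨√(2 * π * (vb:ℝ)) * (√(2 * π * (vs:ℝ)))⁻¹ * Real.exp (m1 / (2 * (vs:ℝ) * vb)),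
    by positivity, fun x => ?_⟩
  simp only [gaussianPDFReal]
  have hsq : √(2 * π * (vb:ℝ)) * (√(2 * π * (vb:ℝ)))⁻¹ = 1 := mul_inv_cancel₀ (by positivity)
  have hexp : Real.exp (m1 / (2 * (vs:ℝ) * vb) + -(x - mb) ^ 2 / (2 * (vb:ℝ)))
      ≤ Real.exp (-(x - ms) ^ 2 / (2 * (vs:ℝ))) := by
    rw [Real.exp_le_exp,
      show -(x - mb) ^ 2 / (2 * (vb:ℝ)) = -((x - mb) ^ 2 / (2 * (vb:ℝ))) from neg_div _ _]
    have := claim x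
    linarith
  calc √(2 * π * (vb:ℝ)) * (√(2 * π * (vs:ℝ)))⁻¹ * Real.exp (m1 / (2 * (vs:ℝ) * vb))
        * ((√(2 * π * (vb:ℝ)))⁻¹ * rexp (-(x - mb) ^ 2 / (2 * (vb:ℝ))))
      = (√(2 * π * (vb:ℝ)) * (√(2 * π * (vb:ℝ)))⁻¹)
        * ((√(2 * π * (vs:ℝ)))⁻¹ * (Real.exp (m1 / (2 * (vs:ℝ) * vb))
          * rexp (-(x - mb) ^ 2 / (2 * (vb:ℝ))))) := by ring
    _ = (√(2 * π * (vs:ℝ)))⁻¹ * Real.exp (m1 / (2 * (vs:ℝ) * vb) + -(x - mb) ^ 2 / (2 * (vb:ℝ))) := by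
        rw [hsq, one_mul, ← Real.exp_add]
    _ ≤ (√(2 * π * (vs:ℝ)))⁻¹ * rexp (-(x - ms) ^ 2 / (2 * (vs:ℝ))) :=
        mul_le_mul_of_nonneg_left hexp (by positivity)

lemma contra (ms mb : ℝ) {vs vb : ℝ≥0} (hvs : vs ≠ 0) (hvb : vb ≠ 0)
    (hcase : (vs:ℝ) < vb ∨ ((vs:ℝ) = vb ∧ mb < ms)) {δ a : ℝ} (hδ : 0 < δ) (ha : 0 < a)
    (hle : ∀ x : ℝ, δ * ∫ t in Iic x, gaussianPDFReal mb vb t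
      ≤ a * ∫ t in Iic x, gaussianPDFReal ms vs t) : False := by
  have hwb : (0:ℝ) < vb := by positivity
  have hws : (0:ℝ) < vs := by positivity
  obtain ⟨ε, hε, hεc⟩ : ∃ ε : ℝ, 0 < ε ∧ ((vs:ℝ) < vb ∨ ((vs:ℝ) = vb ∧ mb + ε < ms)) := by
    rcases hcase with h | ⟨h1, h2⟩
    · exact ⟨1, one_pos, Or.inl h⟩
    · exact ⟨(ms - mb) / 2, by linarith, Or.inr ⟨h1, by linarith⟩⟩
  have hEtend : Tendsto (fun x : ℝ => (x - ε - mb) ^ 2 / (2 * (vb:ℝ))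
      - (x - ms) ^ 2 / (2 * (vs:ℝ))) atBot atBot := by
    rcases hεc with h | ⟨h1, h2⟩
    · have hform : (fun x : ℝ => (x - ε - mb) ^ 2 / (2 * (vb:ℝ)) - (x - ms) ^ 2 / (2 * (vs:ℝ)))
          = fun x => (1 / (2 * (vb:ℝ)) - 1 / (2 * (vs:ℝ))) * x ^ 2
          + (ms / (vs:ℝ) - (ε + mb) / (vb:ℝ)) * x
          + ((ε + mb) ^ 2 / (2 * (vb:ℝ)) - ms ^ 2 / (2 * (vs:ℝ))) := by
        funext x; field_simp; ring
      rw [hform]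
      refine tendsto_quad _ _ ?_
      have h1 : 1 / (2 * (vb:ℝ)) < 1 / (2 * (vs:ℝ)) := by
        apply one_div_lt_one_div_of_lt (by positivity); linarith
      linarith
    · have hform : (fun x : ℝ => (x - ε - mb) ^ 2 / (2 * (vb:ℝ)) - (x - ms) ^ 2 / (2 * (vs:ℝ)))
          = fun x => ((ms - mb - ε) / (vs:ℝ)) * x + ((ε + mb) ^ 2 - ms ^ 2) / (2 * (vs:ℝ)) := by
        funext x; rw [← h1]; field_simp; ring
      rw [hform]
      exact tendsto_lin _ (div_pos (by linarith) hws)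
  have hexp : Tendsto (fun x : ℝ => a * Real.exp ((x - ε - mb) ^ 2 / (2 * (vb:ℝ))
      - (x - ms) ^ 2 / (2 * (vs:ℝ)))) atBot (𝓝 0) := by
    have h2 := (Real.tendsto_exp_atBot.comp hEtend).const_mul a
    simpa using h2
  have hc0pos : 0 < δ * ε * (√(2 * π * (vb:ℝ)))⁻¹ := by positivity
  obtain ⟨x, hx1, hx2⟩ := ((hexp.eventually (gt_mem_nhds hc0pos)).and
    (eventually_le_atBot (min ms mb))).exists
  have hxs : x ≤ ms := le_trans hx2 (min_le_left _ _)
  have hxb : x ≤ mb := le_trans hx2 (min_le_right _ _)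
  have h1 : δ * (ε * gaussianPDFReal mb vb (x - ε)) ≤ a * Real.exp (-(x - ms) ^ 2 / (2 * (vs:ℝ))) :=
    calc δ * (ε * gaussianPDFReal mb vb (x - ε))
        ≤ δ * ∫ t in Iic x, gaussianPDFReal mb vb t :=
          mul_le_mul_of_nonneg_left (cdf_lower mb vb hε hxb) hδ.le
      _ ≤ a * ∫ t in Iic x, gaussianPDFReal ms vs t := hle x
      _ ≤ a * Real.exp (-(x - ms) ^ 2 / (2 * (vs:ℝ))) :=
          mul_le_mul_of_nonneg_left (chernoff ms hvs hxs) ha.le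
  have h2 : δ * ε * (√(2 * π * (vb:ℝ)))⁻¹
      ≤ a * Real.exp ((x - ε - mb) ^ 2 / (2 * (vb:ℝ)) - (x - ms) ^ 2 / (2 * (vs:ℝ))) := by
    have hmul := mul_le_mul_of_nonneg_right h1 (Real.exp_nonneg ((x - ε - mb) ^ 2 / (2 * (vb:ℝ))))
    have hprod : rexp (-(x - ε - mb) ^ 2 / (2 * (vb:ℝ)))
        * rexp ((x - ε - mb) ^ 2 / (2 * (vb:ℝ))) = 1 := by
      rw [← Real.exp_add]
      ring_nf
      exact Real.exp_zero
    calc δ * ε * (√(2 * π * (vb:ℝ)))⁻¹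
        = δ * (ε * gaussianPDFReal mb vb (x - ε)) * Real.exp ((x - ε - mb) ^ 2 / (2 * (vb:ℝ))) := by
          simp only [gaussianPDFReal]
          rw [show δ * (ε * ((√(2 * π * (vb:ℝ)))⁻¹ * rexp (-(x - ε - mb) ^ 2 / (2 * (vb:ℝ)))))
              * rexp ((x - ε - mb) ^ 2 / (2 * (vb:ℝ)))
            = δ * ε * (√(2 * π * (vb:ℝ)))⁻¹
              * (rexp (-(x - ε - mb) ^ 2 / (2 * (vb:ℝ)))
                * rexp ((x - ε - mb) ^ 2 / (2 * (vb:ℝ)))) from by ring,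
            hprod, mul_one]
      _ ≤ a * Real.exp (-(x - ms) ^ 2 / (2 * (vs:ℝ)))
          * Real.exp ((x - ε - mb) ^ 2 / (2 * (vb:ℝ))) := hmul
      _ = a * Real.exp ((x - ε - mb) ^ 2 / (2 * (vb:ℝ)) - (x - ms) ^ 2 / (2 * (vs:ℝ))) := by
          rw [mul_assoc, ← Real.exp_add]
          congr 2
          ring
  exact absurd hx1 (not_lt.mpr h2)

lemma isCDF_mix {ms mb : ℝ} {vs vb : ℝ≥0} (hvs : vs ≠ 0) (hvb : vb ≠ 0)
    {α γ : ℝ} (hγ0 : 0 < γ)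
    (h : ∀ x, 0 ≤ α * gaussianPDFReal ms vs x + (γ - α) * gaussianPDFReal mb vb x) :
    IsCDF (fun x => (α * (∫ t in Iic x, gaussianPDFReal ms vs t)
      + (γ - α) * ∫ t in Iic x, gaussianPDFReal mb vb t) / γ) := by
  set g : ℝ → ℝ := fun t => (α * gaussianPDFReal ms vs t + (γ - α) * gaussianPDFReal mb vb t) / γ
    with hg
  have hint_s := integrable_gaussianPDFReal ms vs
  have hint_b := integrable_gaussianPDFReal mb vb
  have hint : Integrable g := ((hint_s.const_mul α).add (hint_b.const_mul (γ - α))).div_const γ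
  have htot : ∫ x, g x = 1 := by
    simp only [hg]
    rw [integral_div, integral_add (hint_s.const_mul α) (hint_b.const_mul (γ - α)),
      integral_const_mul, integral_const_mul, integral_gaussianPDFReal_eq_one ms hvs,
      integral_gaussianPDFReal_eq_one mb hvb]
    field_simp
    ring
  have hmain := isCDF_of_density g hint (fun x => div_nonneg (h x) hγ0.le) htot
  have heq : (fun x => (α * (∫ t in Iic x, gaussianPDFReal ms vs t)
      + (γ - α) * ∫ t in Iic x, gaussianPDFReal mb vb t) / γ) = fun x => ∫ t in Iic x, g t := by
    funext x
    simp only [hg]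
    rw [integral_div, integral_add (hint_s.const_mul α).integrableOn
      (hint_b.const_mul (γ - α)).integrableOn, integral_const_mul, integral_const_mul]
  rw [heq]
  exact hmain

/-- For a two-component Gaussian mixture with F_s the CDF of N(μ_s, σ_s²) and
F_b the CDF of N(μ_b, σ_b²): α₀ = α if and only if σ_s ≤ σ_b. -/
theorem alpha0_gaussian
    (mus mub sigmas sigmab : ℝ) (hsigmas : 0 < sigmas) (hsigmab : 0 < sigmab)
    (hne : (mus, sigmas) ≠ (mub, sigmab))
    (Fs Fb : ℝ → ℝ)
    (hFs : Fs = fun x => (gaussianReal mus (Real.toNNReal (sigmas ^ 2)) (Set.Iic x)).toReal)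
    (hFb : Fb = fun x => (gaussianReal mub (Real.toNNReal (sigmab ^ 2)) (Set.Iic x)).toReal)
    (α : ℝ) (hα : α ∈ Set.Ioc (0 : ℝ) 1)
    (F : ℝ → ℝ) (hF : F = fun x => α * Fs x + (1 - α) * Fb x) :
    alpha0 F Fb = α ↔ sigmas ≤ sigmab := by
  obtain ⟨hα0, hα1⟩ := hα
  set vs : ℝ≥0 := Real.toNNReal (sigmas ^ 2) with hvsdef
  set vb : ℝ≥0 := Real.toNNReal (sigmab ^ 2) with hvbdef
  have hws : (vs:ℝ) = sigmas ^ 2 := Real.coe_toNNReal _ (sq_nonneg _)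
  have hwb : (vb:ℝ) = sigmab ^ 2 := Real.coe_toNNReal _ (sq_nonneg _)
  have hvs : vs ≠ 0 := by
    intro h
    have : (vs:ℝ) = 0 := by rw [h]; simp
    rw [hws] at this; nlinarith
  have hvb : vb ≠ 0 := by
    intro h
    have : (vb:ℝ) = 0 := by rw [h]; simp
    rw [hwb] at this; nlinarith
  have hFs' : ∀ x, Fs x = ∫ t in Iic x, gaussianPDFReal mus vs t := by
    intro x; rw [hFs]; exact gauss_cdf_eq mus hvs x
  have hFb' : ∀ x, Fb x = ∫ t in Iic x, gaussianPDFReal mub vb t := by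
    intro x; rw [hFb]; exact gauss_cdf_eq mub hvb x
  have hFx : ∀ x, F x = α * Fs x + (1 - α) * Fb x := fun x => by rw [hF]
  set S : Set ℝ := {γ : ℝ | γ ∈ Set.Ioc (0 : ℝ) 1 ∧
    IsCDF (fun x => (F x - (1 - γ) * Fb x) / γ)} with hSdef
  have halpha0 : alpha0 F Fb = sInf S := rfl
  have hGrw : ∀ γ : ℝ, (fun x => (F x - (1 - γ) * Fb x) / γ)
      = fun x => (α * (∫ t in Iic x, gaussianPDFReal mus vs t)
        + (γ - α) * ∫ t in Iic x, gaussianPDFReal mub vb t) / γ := by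
    intro γ; funext x
    rw [hFx x, ← hFs' x, ← hFb' x]
    ring_nf
  have hmemS : ∀ γ : ℝ, γ ∈ Set.Ioc (0:ℝ) 1 →
      (∀ x, 0 ≤ α * gaussianPDFReal mus vs x + (γ - α) * gaussianPDFReal mub vb x) → γ ∈ S := by
    intro γ hγ h
    refine ⟨hγ, ?_⟩
    rw [hGrw γ]
    exact isCDF_mix hvs hvb hγ.1 h
  have hαS : α ∈ S := by
    refine hmemS α ⟨hα0, hα1⟩ fun x => ?_
    rw [sub_self, zero_mul, add_zero]
    exact mul_nonneg hα0.le (gaussianPDFReal_nonneg _ _ _)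
  have hbdd : BddBelow S := ⟨0, fun γ hγ => hγ.1.1.le⟩
  constructor
  · -- α₀ = α → σs ≤ σb
    intro heq
    by_contra hlt
    push_neg at hlt
    have hvblt : (vb:ℝ) < vs := by rw [hws, hwb]; nlinarith
    obtain ⟨c, hc, hcle⟩ := pdf_ratio mus mub hvb hvblt
    have hc1 : 0 < min c 1 := lt_min hc one_pos
    have hc1' : min c 1 ≤ 1 := min_le_right _ _
    have hcc : min c 1 ≤ c := min_le_left _ _
    have hγ0pos : 0 < α * (1 - min c 1 / 2) := mul_pos hα0 (by linarith)
    have hγ0lt : α * (1 - min c 1 / 2) < α := by nlinarith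
    have hγ0S : α * (1 - min c 1 / 2) ∈ S := by
      refine hmemS _ ⟨hγ0pos, le_trans hγ0lt.le hα1⟩ fun x => ?_
      have h1 := hcle x
      have h2 := gaussianPDFReal_nonneg mub vb x
      nlinarith [mul_le_mul_of_nonneg_left h1 hα0.le,
        mul_le_mul_of_nonneg_right (mul_le_mul_of_nonneg_left hcc hα0.le) h2,
        mul_nonneg (mul_nonneg hα0.le hc1.le) h2]
    have : sInf S ≤ α * (1 - min c 1 / 2) := csInf_le hbdd hγ0S
    rw [halpha0] at heq
    linarith
  · -- σs ≤ σb → α₀ = α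
    intro hle
    rw [halpha0]
    refine le_antisymm (csInf_le hbdd hαS) (le_csInf ⟨α, hαS⟩ ?_)
    rintro γ ⟨⟨hγ0, hγ1⟩, hcdf⟩
    by_contra hγα
    push_neg at hγα
    have hδ : 0 < α - γ := by linarith
    obtain ⟨hmono, hrc, hbot, htop⟩ := hcdf
    have h0 : ∀ x, 0 ≤ (F x - (1 - γ) * Fb x) / γ := fun x =>
      le_of_tendsto hbot ((eventually_le_atBot x).mono fun y hy => hmono hy)
    have h1 : ∀ x, (F x - (1 - γ) * Fb x) / γ ≤ 1 := fun x =>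
      ge_of_tendsto htop ((eventually_ge_atTop x).mono fun y hy => hmono hy)
    have hA : ∀ x, (α - γ) * Fb x ≤ α * Fs x := by
      intro x
      have h := h0 x
      have h' := mul_le_mul_of_nonneg_right h hγ0.le
      rw [zero_mul, div_mul_cancel₀ _ hγ0.ne'] at h'
      rw [hFx x] at h'
      linarith
    have hB : ∀ x, (α - γ) * (1 - Fb x) ≤ α * (1 - Fs x) := by
      intro x
      have h := h1 x
      have h' := mul_le_mul_of_nonneg_right h hγ0.le
      rw [one_mul, div_mul_cancel₀ _ hγ0.ne'] at h'
      rw [hFx x] at h'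
      nlinarith
    rcases lt_or_eq_of_le hle with hsl | hse
    · have hvslt : (vs:ℝ) < vb := by rw [hws, hwb]; nlinarith
      exact contra mus mub hvs hvb (Or.inl hvslt) hδ hα0 fun x => by
        rw [← hFb' x, ← hFs' x]; exact hA x
    · have hveq : (vs:ℝ) = vb := by rw [hws, hwb, hse]
      have hmne : mus ≠ mub := by
        intro h
        exact hne (by rw [h, hse])
      rcases hmne.lt_or_gt with hm | hm
      · refine contra (-mus) (-mub) hvs hvb (Or.inr ⟨hveq, by linarith⟩) hδ hα0 fun x => ?_
        have e1 : ∫ t in Iic x, gaussianPDFReal (-mub) vb t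
            = 1 - ∫ t in Iic (-x), gaussianPDFReal mub vb t := by
          have := cdf_reflect mub hvb (-x)
          rwa [neg_neg] at this
        have e2 : ∫ t in Iic x, gaussianPDFReal (-mus) vs t
            = 1 - ∫ t in Iic (-x), gaussianPDFReal mus vs t := by
          have := cdf_reflect mus hvs (-x)
          rwa [neg_neg] at this
        rw [e1, e2, ← hFb' (-x), ← hFs' (-x)]
        exact hB (-x)
      · exact contra mus mub hvs hvb (Or.inr ⟨hveq, hm⟩) hδ hα0 fun x => by
          rw [← hFb' x, ← hFs' x]; exact hA x
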